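/- For any w ∈ S^2(V), the square w^2 of w in the Weyl algebra W(V) lies in S^4(V) + ℂ, i.e., its component in S^2(V) vanishes. -/
import Mathlib


/-  Kostant, Proposition 2.6 (second part):  for `w ∈ S²(V)` the Weyl square `w²` lies in
    `S⁴(V) + ℂ`, i.e. its component in `S²(V)` vanishes. -/

theorem weyl_square_of_S2
    (V : Type) [AddCommGroup V] [Module ℂ V] [FiniteDimensional ℂ V]
    (hdim : Even (Module.finrank ℂ V))
    (B : LinearMap.BilinForm ℂ V)
    (hBalt : ∀ v : V, B v v = 0)
    (hBnd : B.Nondegenerate)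
    -- the symmetric algebra `S(V)`, given by its universal property
    (S : Type) [CommRing S] [Algebra ℂ S]
    (ιS : V →ₗ[ℂ] S)
    (hSuniv : ∀ (A : Type) [CommRing A] [Algebra ℂ A] (f : V →ₗ[ℂ] A),
      ∃! g : S →ₐ[ℂ] A, ∀ v : V, g (ιS v) = f v)
    -- the grading `S(V) = ⊕ₙ Sⁿ(V)`
    (𝒜 : ℕ → Submodule ℂ S) [GradedAlgebra 𝒜]
    (h𝒜 : ∀ n : ℕ, 𝒜 n = LinearMap.range ιS ^ n)
    -- the contraction operators `ι_S(u)`: degree `-1` derivations of `S(V)`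
    (DS : V →ₗ[ℂ] Module.End ℂ S)
    (hDSder : ∀ (u : V) (a b : S), DS u (a * b) = DS u a * b + a * DS u b)
    (hDSgen : ∀ u v : V, DS u (ιS v) = algebraMap ℂ S (B u v))
    (hDSdeg : ∀ (u : V) (n : ℕ), ∀ s ∈ 𝒜 (n + 1), DS u s ∈ 𝒜 n)
    -- the Weyl algebra `W(V)`, given by its universal property
    (W : Type) [Ring W] [Algebra ℂ W]
    (ιW : V →ₗ[ℂ] W)
    (hWrel : ∀ u v : V, ιW u * ιW v - ιW v * ιW u = algebraMap ℂ W (2 * B u v))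
    (hWuniv : ∀ (A : Type) [Ring A] [Algebra ℂ A] (f : V →ₗ[ℂ] A),
      (∀ u v : V, f u * f v - f v * f u = algebraMap ℂ A (2 * B u v)) →
      ∃! g : W →ₐ[ℂ] A, ∀ v : V, g (ιW v) = f v)
    -- the identification `η : W(V) ≃ S(V)`, `η(w) = γ(w)1`
    (η : W ≃ₗ[ℂ] S)
    (hη1 : η 1 = 1)
    (hηγ : ∀ (u : V) (w : W), η (ιW u * w) = ιS u * η w + DS u (η w)) :
    ∀ w : W, η w ∈ 𝒜 2 →
      η (w * w) ∈ 𝒜 4 ⊔ 𝒜 0 ∧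
      DirectSum.decompose 𝒜 (η (w * w)) 2 = 0 := by
  -- antisymmetry of B
  have hanti : ∀ x y : V, B x y = - B y x := by
    intro x y
    have h := hBalt (x + y)
    simp only [map_add, LinearMap.add_apply, hBalt] at h
    linear_combination h
  -- DS kills constants
  have hD1 : ∀ u : V, DS u (1 : S) = 0 := by
    intro u
    have h := hDSder u 1 1
    simp only [mul_one, one_mul] at h
    have h2 : DS u (1 : S) + 0 = DS u 1 + DS u 1 := by simpa using h
    exact (add_left_cancel h2).symm
  have hDalg : ∀ (u : V) (c : ℂ), DS u (algebraMap ℂ S c) = 0 := by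
    intro u c
    rw [Algebra.algebraMap_eq_smul_one, map_smul, hD1, smul_zero]
  have hηalg : ∀ c : ℂ, η (algebraMap ℂ W c) = algebraMap ℂ S c := by
    intro c
    rw [Algebra.algebraMap_eq_smul_one, map_smul, hη1, Algebra.algebraMap_eq_smul_one]
  have hηι : ∀ v : V, η (ιW v) = ιS v := by
    intro v
    have h := hηγ v 1
    rw [mul_one, hη1, mul_one, hD1, add_zero] at h
    exact h
  have hmem1 : ∀ v : V, ιS v ∈ 𝒜 1 := by
    intro v
    rw [h𝒜 1, pow_one]
    exact LinearMap.mem_range_self ιS v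
  have h0mem : ∀ c : ℂ, algebraMap ℂ S c ∈ 𝒜 0 := by
    intro c
    rw [Algebra.algebraMap_eq_smul_one]
    exact Submodule.smul_mem _ _ (SetLike.one_mem_graded 𝒜)
  have hmul : ∀ {i j : ℕ} {a b : S}, a ∈ 𝒜 i → b ∈ 𝒜 j → a * b ∈ 𝒜 (i + j) :=
    fun ha hb => SetLike.mul_mem_graded ha hb
  -- key multiplication formula
  have hkey : ∀ (u v : V) (w : W),
      η (η.symm (ιS u * ιS v) * w)
        = ιS u * ιS v * η w + ιS u * DS v (η w) + ιS v * DS u (η w)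
          + DS u (DS v (η w)) := by
    intro u v w
    have hsymm : η.symm (ιS u * ιS v) = ιW u * ιW v - algebraMap ℂ W (B u v) := by
      apply η.injective
      rw [η.apply_symm_apply, map_sub, hηalg, hηγ u (ιW v), hηι, hDSgen]
      ring
    have hsmul : algebraMap ℂ W (B u v) * w = (B u v) • w := (Algebra.smul_def _ _).symm
    rw [hsymm, sub_mul, map_sub, hsmul, map_smul, mul_assoc, hηγ u (ιW v * w),
      hηγ v w, map_add, hDSder u (ιS v) (η w), hDSgen, Algebra.smul_def]
    ring
  -- contraction on degree-2 generators
  have hDmul : ∀ x u v : V, DS x (ιS u * ιS v)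
      = algebraMap ℂ S (B x u) * ιS v + algebraMap ℂ S (B x v) * ιS u := by
    intro x u v
    rw [hDSder, hDSgen, hDSgen]
    ring
  have hDDmul : ∀ x y u v : V, DS x (DS y (ιS u * ιS v))
      = algebraMap ℂ S (B y u * B x v + B y v * B x u) := by
    intro x y u v
    rw [hDmul, map_add, hDSder, hDSder, hDalg, hDSgen, hDSgen, hDalg, map_add,
      map_mul, map_mul]
    ring
  -- the symmetrized bilinear statement
  have key2 : ∀ s₁ ∈ 𝒜 2, ∀ s₂ ∈ 𝒜 2,
      η (η.symm s₁ * η.symm s₂ + η.symm s₂ * η.symm s₁) ∈ 𝒜 4 ⊔ 𝒜 0 := by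
    have hM2 : (𝒜 2 : Submodule ℂ S) = LinearMap.range ιS * LinearMap.range ιS := by
      rw [h𝒜 2, pow_two]
    intro s₁ hs₁
    rw [hM2] at hs₁
    refine Submodule.mul_induction_on
      (C := fun t => ∀ s₂ ∈ 𝒜 2,
        η (η.symm t * η.symm s₂ + η.symm s₂ * η.symm t) ∈ 𝒜 4 ⊔ 𝒜 0)
      hs₁ ?_ ?_
    · rintro m ⟨u₁, rfl⟩ n ⟨v₁, rfl⟩ s₂ hs₂
      rw [hM2] at hs₂
      refine Submodule.mul_induction_on
        (C := fun t => η (η.symm (ιS u₁ * ιS v₁) * η.symm t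
          + η.symm t * η.symm (ιS u₁ * ιS v₁)) ∈ 𝒜 4 ⊔ 𝒜 0)
        hs₂ ?_ ?_
      · rintro m' ⟨u₂, rfl⟩ n' ⟨v₂, rfl⟩
        have hE : η (η.symm (ιS u₁ * ιS v₁) * η.symm (ιS u₂ * ιS v₂)
              + η.symm (ιS u₂ * ιS v₂) * η.symm (ιS u₁ * ιS v₁))
            = ιS u₁ * ιS v₁ * (ιS u₂ * ιS v₂) + ιS u₂ * ιS v₂ * (ιS u₁ * ιS v₁)
              + algebraMap ℂ S (2 * (B v₁ u₂ * B u₁ v₂ + B v₁ v₂ * B u₁ u₂)) := by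
          rw [map_add, hkey u₁ v₁, hkey u₂ v₂, η.apply_symm_apply, η.apply_symm_apply,
            hDDmul, hDDmul, hDmul, hDmul, hDmul, hDmul,
            hanti v₂ u₁, hanti v₂ v₁, hanti u₂ u₁, hanti u₂ v₁]
          simp only [map_add, map_mul, map_neg, map_ofNat]
          ring
        rw [hE]
        apply Submodule.add_mem
        · apply Submodule.mem_sup_left
          have h1 : ιS u₁ * ιS v₁ * (ιS u₂ * ιS v₂) ∈ 𝒜 4 :=
            hmul (hmul (hmem1 u₁) (hmem1 v₁)) (hmul (hmem1 u₂) (hmem1 v₂))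
          have h2 : ιS u₂ * ιS v₂ * (ιS u₁ * ιS v₁) ∈ 𝒜 4 :=
            hmul (hmul (hmem1 u₂) (hmem1 v₂)) (hmul (hmem1 u₁) (hmem1 v₁))
          exact Submodule.add_mem _ h1 h2
        · exact Submodule.mem_sup_right (h0mem _)
      · intro x y hx' hy'
        have harg : η.symm (ιS u₁ * ιS v₁) * η.symm (x + y)
              + η.symm (x + y) * η.symm (ιS u₁ * ιS v₁)
            = (η.symm (ιS u₁ * ιS v₁) * η.symm x + η.symm x * η.symm (ιS u₁ * ιS v₁))
              + (η.symm (ιS u₁ * ιS v₁) * η.symm y + η.symm y * η.symm (ιS u₁ * ιS v₁)) := by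
          rw [map_add]
          noncomm_ring
        rw [harg, map_add]
        exact Submodule.add_mem _ hx' hy'
    · intro x y ihx ihy s₂ hs₂
      have hx' := ihx s₂ hs₂
      have hy' := ihy s₂ hs₂
      have harg : η.symm (x + y) * η.symm s₂ + η.symm s₂ * η.symm (x + y)
          = (η.symm x * η.symm s₂ + η.symm s₂ * η.symm x)
            + (η.symm y * η.symm s₂ + η.symm s₂ * η.symm y) := by
        rw [map_add]
        noncomm_ring
      rw [harg, map_add]
      exact Submodule.add_mem _ hx' hy'
  intro w hw
  have hmem : η (w * w) ∈ 𝒜 4 ⊔ 𝒜 0 := by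
    have h := key2 (η w) hw (η w) hw
    rw [η.symm_apply_apply] at h
    have heq : η (w * w) = (2⁻¹ : ℂ) • η (w * w + w * w) := by
      rw [map_add, ← two_smul ℂ (η (w * w)), smul_smul]
      norm_num
    rw [heq]
    exact Submodule.smul_mem _ _ h
  refine ⟨hmem, ?_⟩
  obtain ⟨a, ha, b, hb, hab⟩ := Submodule.mem_sup.mp hmem
  have h1 : ((DirectSum.decompose 𝒜 a) 2 : S) = 0 :=
    DirectSum.decompose_of_mem_ne 𝒜 ha (by norm_num)
  have h2 : ((DirectSum.decompose 𝒜 b) 2 : S) = 0 :=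
    DirectSum.decompose_of_mem_ne 𝒜 hb (by norm_num)
  rw [← hab, DirectSum.decompose_add, DirectSum.add_apply]
  refine Subtype.ext ?_
  simp [h1, h2]
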